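/- arXiv:2603.09795 — 2 statements merged into one kernel-verified Lean document; each statement's English description precedes it below -/
import Mathlib

section
/- If a graph G contains an M-Jposy relative to some maximum matching M, then G is not a König–Egerváry graph. -/
open SimpleGraph

variable {V : Type*} [DecidableEq V]

/-- `M` is a matching of `G`: a set of edges of `G`, pairwise not sharing a vertex. -/
def IsMatching' (G : SimpleGraph V) (M : Finset (Sym2 V)) : Prop :=
  (↑M : Set (Sym2 V)) ⊆ G.edgeSet ∧
    ∀ e ∈ M, ∀ f ∈ M, e ≠ f → ∀ v : V, ¬(v ∈ e ∧ v ∈ f)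

/-- `M` is a maximum matching of `G`. -/
def IsMaxMatching (G : SimpleGraph V) (M : Finset (Sym2 V)) : Prop :=
  IsMatching' G M ∧ ∀ M' : Finset (Sym2 V), IsMatching' G M' → M'.card ≤ M.card

/-- The vertex `v` is matched (saturated) by `M`. -/
def MatchedBy (M : Finset (Sym2 V)) (v : V) : Prop :=
  ∃ e ∈ M, v ∈ e

/-- A walk is `M`-alternating: consecutive edges alternate between `M` and its complement. -/
def IsAltWalk {G : SimpleGraph V} (M : Finset (Sym2 V)) {u v : V} (w : G.Walk u v) : Prop :=
  w.edges.Chain' (fun e f => e ∈ M ↔ f ∉ M)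

/-- The first edge of the walk belongs to `M`. -/
def StartsMatched {G : SimpleGraph V} (M : Finset (Sym2 V)) {u v : V} (w : G.Walk u v) : Prop :=
  ∃ e, w.edges.head? = some e ∧ e ∈ M

/-- The last edge of the walk belongs to `M`. -/
def EndsMatched {G : SimpleGraph V} (M : Finset (Sym2 V)) {u v : V} (w : G.Walk u v) : Prop :=
  ∃ e, w.edges.getLast? = some e ∧ e ∈ M

/-- The first edge of the walk does not belong to `M`. -/
def StartsUnmatched {G : SimpleGraph V} (M : Finset (Sym2 V)) {u v : V} (w : G.Walk u v) : Prop :=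
  ∃ e, w.edges.head? = some e ∧ e ∉ M

/-- The last edge of the walk does not belong to `M`. -/
def EndsUnmatched {G : SimpleGraph V} (M : Finset (Sym2 V)) {u v : V} (w : G.Walk u v) : Prop :=
  ∃ e, w.edges.getLast? = some e ∧ e ∉ M

/-- An `M`-blossom with base `b`: an odd cycle of length `2k+1` containing exactly `k`
edges of `M`, alternating, whose base `b` is not matched within the cycle. -/
def IsBlossom (G : SimpleGraph V) (M : Finset (Sym2 V)) {b : V} (c : G.Walk b b) : Prop :=
  c.IsCycle ∧ Odd c.length ∧ IsAltWalk M c ∧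
    2 * (c.edges.toFinset ∩ M).card + 1 = c.length ∧
    ∀ e ∈ c.edges, e ∈ M → b ∉ e

/-- An `M`-flower: an `M`-blossom with base `b` together with an even `M`-alternating
stem from `b` to an `M`-unmatched vertex `u`, sharing only the base with the blossom. -/
def IsFlower (G : SimpleGraph V) (M : Finset (Sym2 V)) {b u : V}
    (c : G.Walk b b) (s : G.Walk b u) : Prop :=
  IsBlossom G M c ∧ s.IsPath ∧ Even s.length ∧ IsAltWalk M s ∧
    ¬ MatchedBy M u ∧ ∀ x ∈ s.support, x ∈ c.support → x = b

/-- An `M`-posy: two distinct `M`-blossoms joined by an odd `M`-alternating path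
between their bases, starting and ending with matched edges. -/
def IsPosy (G : SimpleGraph V) (M : Finset (Sym2 V)) {b₁ b₂ : V}
    (c₁ : G.Walk b₁ b₁) (c₂ : G.Walk b₂ b₂) (p : G.Walk b₁ b₂) : Prop :=
  IsBlossom G M c₁ ∧ IsBlossom G M c₂ ∧ (b₁ ≠ b₂ ∨ c₁.edges ≠ c₂.edges) ∧
    p.IsPath ∧ Odd p.length ∧ IsAltWalk M p ∧ StartsMatched M p ∧ EndsMatched M p

/-- An `M`-Tposy: a posy whose connecting path is internally disjoint from both blossoms. -/
def IsTposy (G : SimpleGraph V) (M : Finset (Sym2 V)) {b₁ b₂ : V}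
    (c₁ : G.Walk b₁ b₁) (c₂ : G.Walk b₂ b₂) (p : G.Walk b₁ b₂) : Prop :=
  IsPosy G M c₁ c₂ p ∧
    ∀ x ∈ p.support, x ≠ b₁ → x ≠ b₂ → x ∉ c₁.support ∧ x ∉ c₂.support

/-- An `M`-Jposy: two (not necessarily distinct) `M`-blossoms joined by an odd
`M`-alternating walk between their bases, starting and ending with matched edges. -/
def IsJposy (G : SimpleGraph V) (M : Finset (Sym2 V)) {b₁ b₂ : V}
    (c₁ : G.Walk b₁ b₁) (c₂ : G.Walk b₂ b₂) (w : G.Walk b₁ b₂) : Prop :=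
  IsBlossom G M c₁ ∧ IsBlossom G M c₂ ∧
    Odd w.length ∧ IsAltWalk M w ∧ StartsMatched M w ∧ EndsMatched M w

/-- An `M`-Jflower: an `M`-blossom together with an `M`-alternating walk from its base
to an `M`-unmatched vertex. -/
def IsJflower (G : SimpleGraph V) (M : Finset (Sym2 V)) {b u : V}
    (c : G.Walk b b) (w : G.Walk b u) : Prop :=
  IsBlossom G M c ∧ IsAltWalk M w ∧ ¬ MatchedBy M u

/-- The vertex `x` belongs to some `M`-flower. -/
def InFlower (G : SimpleGraph V) (M : Finset (Sym2 V)) (x : V) : Prop :=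
  ∃ (b u : V) (c : G.Walk b b) (s : G.Walk b u),
    IsFlower G M c s ∧ (x ∈ c.support ∨ x ∈ s.support)

/-- The vertex `x` belongs to some `M`-posy. -/
def InPosy (G : SimpleGraph V) (M : Finset (Sym2 V)) (x : V) : Prop :=
  ∃ (b₁ b₂ : V) (c₁ : G.Walk b₁ b₁) (c₂ : G.Walk b₂ b₂) (p : G.Walk b₁ b₂),
    IsPosy G M c₁ c₂ p ∧ (x ∈ c₁.support ∨ x ∈ c₂.support ∨ x ∈ p.support)

/-- The vertex `x` belongs to some `M`-Tposy. -/
def InTposy (G : SimpleGraph V) (M : Finset (Sym2 V)) (x : V) : Prop :=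
  ∃ (b₁ b₂ : V) (c₁ : G.Walk b₁ b₁) (c₂ : G.Walk b₂ b₂) (p : G.Walk b₁ b₂),
    IsTposy G M c₁ c₂ p ∧ (x ∈ c₁.support ∨ x ∈ c₂.support ∨ x ∈ p.support)

/-- The vertex `x` belongs to some `M`-Jposy. -/
def InJposy (G : SimpleGraph V) (M : Finset (Sym2 V)) (x : V) : Prop :=
  ∃ (b₁ b₂ : V) (c₁ : G.Walk b₁ b₁) (c₂ : G.Walk b₂ b₂) (w : G.Walk b₁ b₂),
    IsJposy G M c₁ c₂ w ∧ (x ∈ c₁.support ∨ x ∈ c₂.support ∨ x ∈ w.support)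

/-- The vertex `x` belongs to some `M`-Jflower. -/
def InJflower (G : SimpleGraph V) (M : Finset (Sym2 V)) (x : V) : Prop :=
  ∃ (b u : V) (c : G.Walk b b) (w : G.Walk b u),
    IsJflower G M c w ∧ (x ∈ c.support ∨ x ∈ w.support)

/-- The independence number of `G`. -/
noncomputable def indepNum (G : SimpleGraph V) : ℕ :=
  sSup {n | ∃ s : Finset V, (∀ u ∈ s, ∀ w ∈ s, ¬ G.Adj u w) ∧ s.card = n}

/-- The matching number of `G`. -/
noncomputable def matchNum (G : SimpleGraph V) : ℕ :=
  sSup {n | ∃ M : Finset (Sym2 V), IsMatching' G M ∧ M.card = n}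

/-- `G` is a König–Egerváry graph: `α(G) + μ(G) = |V(G)|`. -/
def IsKE (G : SimpleGraph V) [Fintype V] : Prop :=
  _root_.indepNum G + matchNum G = Fintype.card V

/-- Propagation of membership in a "one endpoint per matched edge" set along an
alternating walk. -/
lemma walkprop {V : Type*} [DecidableEq V] {G : SimpleGraph V} (M : Finset (Sym2 V))
    (S : Finset V)
    (hA : ∀ a b : V, G.Adj a b → a ∈ S → b ∉ S)
    (hB : ∀ a b : V, s(a, b) ∈ M → (a ∈ S ↔ b ∉ S)) :
    ∀ {u v : V} (w : G.Walk u v), IsAltWalk M w →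
      (∀ e, w.edges.head? = some e → (e ∈ M ↔ u ∉ S)) →
      (v ∈ S ↔ (u ∈ S ↔ Even w.length)) := by
  intro u v w
  induction w with
  | nil => simp
  | @cons u x v adj w' ih =>
    intro halt hhead
    have he : s(u, x) ∈ M ↔ u ∉ S := hhead _ (by simp [SimpleGraph.Walk.edges_cons])
    rw [IsAltWalk, SimpleGraph.Walk.edges_cons, List.Chain', List.isChain_cons] at halt
    obtain ⟨hrel, htail⟩ := halt
    by_cases hu : u ∈ S
    · have heM : s(u, x) ∉ M := by tauto
      have hx : x ∉ S := hA u x adj hu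
      have ih' := ih htail (fun f hf => by
        have := hrel f (by simp [hf])
        constructor
        · intro _; exact hx
        · intro _; tauto)
      rw [SimpleGraph.Walk.length_cons, Nat.even_add_one]
      rw [ih']
      tauto
    · have heM : s(u, x) ∈ M := by tauto
      have hx : x ∈ S := by have := hB u x heM; tauto
      have ih' := ih htail (fun f hf => by
        have := hrel f (by simp [hf])
        constructor
        · intro hfM; exact absurd hfM (by tauto)
        · intro hxS; exact absurd hx hxS)
      rw [SimpleGraph.Walk.length_cons, Nat.even_add_one]
      rw [ih']
      tauto

/-- The base of a blossom cannot belong to `S`. -/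
lemma blossom_base_not_mem {V : Type*} [DecidableEq V] {G : SimpleGraph V}
    (M : Finset (Sym2 V)) (S : Finset V)
    (hA : ∀ a b : V, G.Adj a b → a ∈ S → b ∉ S)
    (hB : ∀ a b : V, s(a, b) ∈ M → (a ∈ S ↔ b ∉ S))
    {b : V} (c : G.Walk b b) (hc : IsBlossom G M c) : b ∉ S := by
  intro hb
  obtain ⟨_, hodd, halt, _, hbase⟩ := hc
  cases c with
  | nil => simp at hodd
  | @cons _ x _ adj c' =>
    have hfirst : s(b, x) ∉ M := fun hmem =>
      hbase _ (by simp [SimpleGraph.Walk.edges_cons]) hmem (by simp)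
    have := walkprop M S hA hB _ halt
      (fun e hecons => by
        simp only [SimpleGraph.Walk.edges_cons, List.head?_cons, Option.some.injEq] at hecons
        subst hecons
        constructor
        · intro hmem; exact absurd hmem hfirst
        · intro hbs; exact absurd hb hbs)
    rw [this] at hb
    have : Even (SimpleGraph.Walk.cons adj c').length := by tauto
    exact (Nat.not_even_iff_odd.mpr hodd) this

/-- If `G` contains an `M`-Jposy relative to some maximum matching `M`,
then `G` is not a König–Egerváry graph. -/
theorem stmt_3 {V : Type*} [DecidableEq V] [Fintype V] (G : SimpleGraph V)
    (M : Finset (Sym2 V)) (hM : IsMaxMatching G M)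
    (h : ∃ (b₁ b₂ : V) (c₁ : G.Walk b₁ b₁) (c₂ : G.Walk b₂ b₂) (w : G.Walk b₁ b₂),
      IsJposy G M c₁ c₂ w) :
    ¬ IsKE G := by
  obtain ⟨b₁, b₂, c₁, c₂, w, hc₁, hc₂, hodd, halt, hstart, _⟩ := h
  intro hKE
  -- matchNum G = M.card
  have hbddm : ∀ n ∈ {n | ∃ M' : Finset (Sym2 V), IsMatching' G M' ∧ M'.card = n},
      n ≤ M.card := by rintro n ⟨M', hM', rfl⟩; exact hM.2 M' hM'
  have hμ : matchNum G = M.card := by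
    refine le_antisymm (csSup_le ⟨M.card, M, hM.1, rfl⟩ hbddm) ?_
    exact le_csSup ⟨M.card, hbddm⟩ ⟨M, hM.1, rfl⟩
  -- obtain a maximum independent set S
  have hne : {n | ∃ s : Finset V, (∀ u ∈ s, ∀ w ∈ s, ¬ G.Adj u w) ∧ s.card = n}.Nonempty :=
    ⟨0, ∅, by simp⟩
  have hbdd : BddAbove {n | ∃ s : Finset V, (∀ u ∈ s, ∀ w ∈ s, ¬ G.Adj u w) ∧ s.card = n} := by
    refine ⟨Fintype.card V, ?_⟩
    rintro n ⟨s, _, rfl⟩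
    simpa using s.card_le_univ
  obtain ⟨S, hSind, hScard⟩ := Nat.sSup_mem hne hbdd
  have hcardV : S.card + M.card = Fintype.card V := by
    unfold IsKE _root_.indepNum at hKE
    rw [hμ] at hKE
    rw [hScard]
    exact hKE
  -- the complement T of S
  set T : Finset V := Finset.univ \ S with hT
  have hTcard : T.card = M.card := by
    rw [hT, Finset.card_sdiff_of_subset (Finset.subset_univ S), Finset.card_univ]
    omega
  -- adjacency of matched endpoints
  have hadj : ∀ a b : V, s(a, b) ∈ M → G.Adj a b := fun a b hab =>
    G.mem_edgeSet.mp (hM.1.1 hab)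
  have hA : ∀ a b : V, G.Adj a b → a ∈ S → b ∉ S := fun a b hab ha hb =>
    hSind a ha b hb hab
  -- every matched edge has an endpoint in T
  have hone : ∀ e ∈ M, ∃ x, x ∈ T ∧ x ∈ e := by
    intro e he
    induction e using Sym2.ind with
    | _ a b =>
      by_cases ha : a ∈ S
      · exact ⟨b, by simp [hT, hA a b (hadj a b he) ha], by simp⟩
      · exact ⟨a, by simp [hT, ha], by simp⟩
  classical
  set g : Sym2 V → V := fun e => if h : ∃ x, x ∈ T ∧ x ∈ e then h.choose else b₁ with hg
  have hgprop : ∀ e ∈ M, g e ∈ T ∧ g e ∈ e := by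
    intro e he
    have hex := hone e he
    simp only [hg, dif_pos hex]
    exact hex.choose_spec
  have hginj : Set.InjOn g ↑M := by
    intro e he f hf hef
    by_contra hne
    exact hM.1.2 e he f hf hne (g e)
      ⟨(hgprop e he).2, hef ▸ (hgprop f hf).2⟩
  have himg : M.image g ⊆ T := by
    intro x hx
    obtain ⟨e, he, rfl⟩ := Finset.mem_image.mp hx
    exact (hgprop e he).1
  have himgcard : (M.image g).card = M.card := Finset.card_image_of_injOn hginj
  have himgeq : M.image g = T :=
    Finset.eq_of_subset_of_card_le himg (by rw [hTcard, himgcard])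
  -- exactly one endpoint of each matched edge in S
  have hB : ∀ a b : V, s(a, b) ∈ M → (a ∈ S ↔ b ∉ S) := by
    intro a b hab
    have hne : a ≠ b := (hadj a b hab).ne
    constructor
    · intro ha; exact hA a b (hadj a b hab) ha
    · intro hb
      by_contra ha
      have haT : a ∈ T := by simp [hT, ha]
      have hbT : b ∈ T := by simp [hT, hb]
      obtain ⟨ea, hea, hgea⟩ := Finset.mem_image.mp (himgeq ▸ haT)
      obtain ⟨eb, heb, hgeb⟩ := Finset.mem_image.mp (himgeq ▸ hbT)
      have haea : a ∈ ea := hgea ▸ (hgprop ea hea).2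
      have hbeb : b ∈ eb := hgeb ▸ (hgprop eb heb).2
      have hea' : ea = s(a, b) := by
        by_contra hne'
        exact hM.1.2 ea hea _ hab hne' a ⟨haea, by simp⟩
      have heb' : eb = s(a, b) := by
        by_contra hne'
        exact hM.1.2 eb heb _ hab hne' b ⟨hbeb, by simp⟩
      exact hne (hgea.symm.trans (by rw [hea', ← heb', hgeb]))
  -- the blossom bases are not in S
  have hb₁ : b₁ ∉ S := blossom_base_not_mem M S hA hB c₁ hc₁
  have hb₂ : b₂ ∉ S := blossom_base_not_mem M S hA hB c₂ hc₂
  -- propagate along the connecting walk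
  obtain ⟨e₀, he₀, he₀M⟩ := hstart
  have := walkprop M S hA hB w halt (fun e he => by
    rw [he₀] at he
    injection he with he
    subst he
    exact ⟨fun _ => hb₁, fun _ => he₀M⟩)
  rw [← Nat.not_even_iff_odd] at hodd
  have : b₂ ∈ S := by rw [this]; tauto
  exact hb₂ this
end

section
/- Let G be a graph, M a maximum matching, and H an M-Jposy of G. Then for any two vertices u, v of H there exists both an M-alternating walk from u to v starting and ending with matched edges, and an M-alternating walk from u to v starting and ending with unmatched edges. -/
open SimpleGraph

variable {V : Type*} [DecidableEq V]

section AltHelpers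

variable {G : SimpleGraph V} {M : Finset (Sym2 V)}

/-- Alternating walk with specified first/last edge matching status. -/
def AltB (M : Finset (Sym2 V)) {G : SimpleGraph V} {u v : V} (w : G.Walk u v)
    (s t : Bool) : Prop :=
  w.edges.Chain' (fun e f => e ∈ M ↔ f ∉ M) ∧
    (∃ e, w.edges.head? = some e ∧ (e ∈ M ↔ s = true)) ∧
    (∃ e, w.edges.getLast? = some e ∧ (e ∈ M ↔ t = true))

lemma exists_head?_of_ne_nil {α : Type*} {l : List α} (h : l ≠ []) :
    ∃ a, l.head? = some a := by
  cases l with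
  | nil => exact absurd rfl h
  | cons a l => exact ⟨a, rfl⟩

lemma exists_getLast?_of_ne_nil {α : Type*} {l : List α} (h : l ≠ []) :
    ∃ a, l.getLast? = some a := by
  obtain ⟨a, ha⟩ := exists_head?_of_ne_nil (l := l.reverse) (by simpa using h)
  exact ⟨a, by rwa [List.head?_reverse] at ha⟩

lemma AltB.reverse {u v : V} {w : G.Walk u v} {s t : Bool} (h : AltB M w s t) :
    AltB M w.reverse t s := by
  obtain ⟨hc, ⟨e, he, hem⟩, ⟨f, hf, hfm⟩⟩ := h
  refine ⟨?_, ⟨f, ?_, hfm⟩, ⟨e, ?_, hem⟩⟩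
  · rw [Walk.edges_reverse, List.Chain', List.isChain_reverse]
    exact hc.imp fun a b hab => by tauto
  · rw [Walk.edges_reverse, List.head?_reverse]; exact hf
  · rw [Walk.edges_reverse, List.getLast?_reverse]; exact he

lemma AltB.append {u v x : V} {p : G.Walk u v} {q : G.Walk v x} {s a t : Bool}
    (hp : AltB M p s a) (hq : AltB M q (!a) t) : AltB M (p.append q) s t := by
  obtain ⟨pc, ⟨e, he, hem⟩, ⟨f, hf, hfm⟩⟩ := hp
  obtain ⟨g, hg, hgm⟩ := hq.2.1
  obtain ⟨k, hk, hkm⟩ := hq.2.2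
  have hpne : p.edges ≠ [] := by intro h0; rw [h0] at he; simp at he
  have hqne : q.edges ≠ [] := by intro h0; rw [h0] at hk; simp at hk
  refine ⟨?_, ⟨e, ?_, hem⟩, ⟨k, ?_, hkm⟩⟩
  · rw [Walk.edges_append, List.Chain', List.isChain_append]
    refine ⟨pc, hq.1, ?_⟩
    intro x hx y hy
    rw [hf, Option.mem_def, Option.some.injEq] at hx
    rw [hg, Option.mem_def, Option.some.injEq] at hy
    subst hx; subst hy
    cases a <;> simp_all
  · rw [Walk.edges_append, List.head?_append_of_ne_nil _ hpne]; exact he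
  · rw [Walk.edges_append, List.getLast?_append_of_ne_nil _ hqne]; exact hk

lemma AltB.split {u v x : V} {p : G.Walk u x} {q : G.Walk x v} {s t : Bool}
    (h : AltB M (p.append q) s t) (hp : p.edges ≠ []) (hq : q.edges ≠ []) :
    ∃ a : Bool, AltB M p s a ∧ AltB M q (!a) t := by
  obtain ⟨hc, ⟨e, he, hem⟩, ⟨k, hk, hkm⟩⟩ := h
  rw [Walk.edges_append, List.Chain', List.isChain_append] at hc
  obtain ⟨pc, qc, hjunc⟩ := hc
  rw [Walk.edges_append, List.head?_append_of_ne_nil _ hp] at he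
  rw [Walk.edges_append, List.getLast?_append_of_ne_nil _ hq] at hk
  obtain ⟨f, hf⟩ := exists_getLast?_of_ne_nil hp
  obtain ⟨g, hg⟩ := exists_head?_of_ne_nil hq
  have hfg : f ∈ M ↔ g ∉ M := hjunc f (by rw [hf]; rfl) g (by rw [hg]; rfl)
  by_cases hfM : f ∈ M
  · exact ⟨true, ⟨pc, ⟨e, he, hem⟩, ⟨f, hf, by simp [hfM]⟩⟩,
      ⟨qc, ⟨g, hg, by simp [hfg.mp hfM]⟩, ⟨k, hk, hkm⟩⟩⟩
  · have hgM : g ∈ M := by by_contra hgM; exact hfM (hfg.mpr hgM)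
    exact ⟨false, ⟨pc, ⟨e, he, hem⟩, ⟨f, hf, by simp [hfM]⟩⟩,
      ⟨qc, ⟨g, hg, by simp [hgM]⟩, ⟨k, hk, hkm⟩⟩⟩

lemma head_edge_mem_left {u v : V} (p : G.Walk u v) {e : Sym2 V}
    (h : p.edges.head? = some e) : u ∈ e := by
  cases p with
  | nil => simp [Walk.edges] at h
  | cons h' p' =>
      rw [Walk.edges_cons, List.head?_cons, Option.some.injEq] at h
      rw [← h]; exact Sym2.mem_mk_left _ _

lemma last_edge_mem_right {u v : V} (p : G.Walk u v) {e : Sym2 V}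
    (h : p.edges.getLast? = some e) : v ∈ e :=
  head_edge_mem_left p.reverse (by rw [Walk.edges_reverse, List.head?_reverse]; exact h)

lemma edges_ne_nil_of_ne {u v : V} (h : u ≠ v) (p : G.Walk u v) : p.edges ≠ [] := by
  intro h0
  exact h (Walk.eq_of_length_eq_zero (by rw [← Walk.length_edges, h0]; rfl))

lemma blossom_altB {b : V} {c : G.Walk b b} (hc : IsBlossom G M c) :
    AltB M c false false := by
  obtain ⟨hcy, hodd, halt, _, hbase⟩ := hc
  have hne : c.edges ≠ [] := by
    intro h0
    rw [← Walk.length_edges, h0] at hodd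
    simp at hodd
  obtain ⟨e, he⟩ := exists_head?_of_ne_nil hne
  obtain ⟨f, hf⟩ := exists_getLast?_of_ne_nil hne
  refine ⟨halt, ⟨e, he, ?_⟩, ⟨f, hf, ?_⟩⟩
  · simp only [Bool.false_eq_true, iff_false]
    intro heM
    exact hbase e (List.mem_of_mem_head? (by rw [he]; rfl)) heM (head_edge_mem_left c he)
  · simp only [Bool.false_eq_true, iff_false]
    intro hfM
    have hfc : f ∈ c.edges := by
      have : f ∈ c.edges.reverse.head? := by rw [List.head?_reverse, hf]; rfl
      simpa using List.mem_of_mem_head? this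
    exact hbase f hfc hfM (last_edge_mem_right c hf)

end AltHelpers

/-- In an `M`-Jposy, any two vertices are joined by an `mm`-alternating
walk and by an `nn`-alternating walk. -/
theorem stmt_12 {V : Type*} [DecidableEq V] (G : SimpleGraph V) (M : Finset (Sym2 V))
    (hM : IsMaxMatching G M) {b₁ b₂ : V}
    (c₁ : G.Walk b₁ b₁) (c₂ : G.Walk b₂ b₂) (w : G.Walk b₁ b₂)
    (hJ : IsJposy G M c₁ c₂ w) (u v : V)
    (hu : u ∈ c₁.support ∨ u ∈ c₂.support ∨ u ∈ w.support)
    (hv : v ∈ c₁.support ∨ v ∈ c₂.support ∨ v ∈ w.support) :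
    (∃ q : G.Walk u v, IsAltWalk M q ∧ StartsMatched M q ∧ EndsMatched M q) ∧
    (∃ q : G.Walk u v, IsAltWalk M q ∧ StartsUnmatched M q ∧ EndsUnmatched M q) := by
  classical
  obtain ⟨hb1, hb2, hodd, halt, hsm, hem⟩ := hJ
  have hC1 : AltB M c₁ false false := blossom_altB hb1
  have hC2 : AltB M c₂ false false := blossom_altB hb2
  have hW : AltB M w true true := by
    obtain ⟨e, he, heM⟩ := hsm
    obtain ⟨f, hf, hfM⟩ := hem
    exact ⟨halt, ⟨e, he, by simp [heM]⟩, ⟨f, hf, by simp [hfM]⟩⟩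
  have hWW : AltB M (w.append (c₂.append w.reverse)) true true :=
    hW.append (hC2.append hW.reverse)
  have hQ2 : AltB M (w.append c₂) true false := hW.append hC2
  have hKey : ∀ x, (x ∈ c₁.support ∨ x ∈ c₂.support ∨ x ∈ w.support) →
      (∃ pq : G.Walk b₁ x, AltB M pq true true) ∧
      (∃ pq : G.Walk b₁ x, AltB M pq true false) := by
    intro x hx
    rcases hx with hx1 | hx2 | hxw
    · by_cases hxb : x = b₁
      · subst hxb
        exact ⟨⟨_, hWW⟩, ⟨_, hWW.append hC1⟩⟩
      · have hsplit := Walk.take_spec c₁ hx1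
        have hsp : AltB M ((c₁.takeUntil x hx1).append (c₁.dropUntil x hx1)) false false :=
          hsplit.symm ▸ hC1
        obtain ⟨a, hp, hs⟩ := hsp.split
          (edges_ne_nil_of_ne (fun h => hxb h.symm) _)
          (edges_ne_nil_of_ne hxb _)
        have h1 : AltB M (((w.append (c₂.append w.reverse))).append (c₁.takeUntil x hx1))
            true a := hWW.append hp
        have h2 : AltB M ((w.append (c₂.append w.reverse)).append (c₁.dropUntil x hx1).reverse)
            true (!a) := hWW.append hs.reverse
        cases a
        · exact ⟨⟨_, h2⟩, ⟨_, h1⟩⟩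
        · exact ⟨⟨_, h1⟩, ⟨_, h2⟩⟩
    · by_cases hxb : x = b₂
      · subst hxb
        exact ⟨⟨w, hW⟩, ⟨_, hQ2⟩⟩
      · have hsplit := Walk.take_spec c₂ hx2
        have hsp : AltB M ((c₂.takeUntil x hx2).append (c₂.dropUntil x hx2)) false false :=
          hsplit.symm ▸ hC2
        obtain ⟨a, hp, hs⟩ := hsp.split
          (edges_ne_nil_of_ne (fun h => hxb h.symm) _)
          (edges_ne_nil_of_ne hxb _)
        have h1 : AltB M (w.append (c₂.takeUntil x hx2)) true a := hW.append hp
        have h2 : AltB M (w.append (c₂.dropUntil x hx2).reverse) true (!a) :=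
          hW.append hs.reverse
        cases a
        · exact ⟨⟨_, h2⟩, ⟨_, h1⟩⟩
        · exact ⟨⟨_, h1⟩, ⟨_, h2⟩⟩
    · by_cases hxb1 : x = b₁
      · subst hxb1
        exact ⟨⟨_, hWW⟩, ⟨_, hWW.append hC1⟩⟩
      · by_cases hxb2 : x = b₂
        · subst hxb2
          exact ⟨⟨w, hW⟩, ⟨_, hQ2⟩⟩
        · have hsplit := Walk.take_spec w hxw
          have hsp : AltB M ((w.takeUntil x hxw).append (w.dropUntil x hxw)) true true :=
            hsplit.symm ▸ hW
          obtain ⟨a, hp, hs⟩ := hsp.split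
            (edges_ne_nil_of_ne (fun h => hxb1 h.symm) _)
            (edges_ne_nil_of_ne hxb2 _)
          have h1 : AltB M (w.takeUntil x hxw) true a := hp
          have h2 : AltB M ((w.append c₂).append (w.dropUntil x hxw).reverse) true (!a) :=
            hQ2.append hs.reverse
          cases a
          · exact ⟨⟨_, h2⟩, ⟨_, h1⟩⟩
          · exact ⟨⟨_, h1⟩, ⟨_, h2⟩⟩
  obtain ⟨⟨pu, hpu⟩, ⟨qu, hqu⟩⟩ := hKey u hu
  obtain ⟨⟨pv, hpv⟩, ⟨qv, hqv⟩⟩ := hKey v hv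
  constructor
  · refine ⟨(pu.reverse.append c₁).append pv, ?_⟩
    have h := (hpu.reverse.append hC1).append hpv
    obtain ⟨hc, ⟨e, he, heM⟩, ⟨f, hf, hfM⟩⟩ := h
    exact ⟨hc, ⟨e, he, by simpa using heM⟩, ⟨f, hf, by simpa using hfM⟩⟩
  · refine ⟨(qu.reverse.append c₁).append qv, ?_⟩
    have h := (hqu.reverse.append hC1).append hqv
    obtain ⟨hc, ⟨e, he, heM⟩, ⟨f, hf, hfM⟩⟩ := h
    exact ⟨hc, ⟨e, he, by simpa using heM⟩, ⟨f, hf, by simpa using hfM⟩⟩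
end
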